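/- Suppose γ has cofinality greater than ω₁, ⟨𝒞_α : α < γ⟩ is a potential □(γ, ω)-sequence in which each 𝒞_α is enumerated in order type at most ω, and the set of threads is nonempty and countable. Then there exist a limit ordinal α < γ, a club C ∈ 𝒞_α, and a unique thread E with E ∩ α = C. -/

import Mathlib

open Ordinal Set

/-- `C` is club (closed and unbounded) in `γ`. -/
def IsClubIn (C : Set Ordinal) (γ : Ordinal) : Prop :=
  C ⊆ Set.Iio γ ∧ (∀ δ < γ, ∃ β ∈ C, δ ≤ β) ∧
    ∀ δ < γ, Order.IsSuccLimit δ → (∀ ε < δ, ∃ β ∈ C, ε ≤ β ∧ β < δ) → δ ∈ C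

/-- `β` is a limit point of `C`. -/
def IsLimitPt (C : Set Ordinal) (β : Ordinal) : Prop :=
  Order.IsSuccLimit β ∧ ∀ ε < β, ∃ x ∈ C, ε ≤ x ∧ x < β

/-- A potential `□(γ)`-sequence: a coherent sequence of clubs. -/
def IsCoherentSeq (C : Ordinal → Set Ordinal) (γ : Ordinal) : Prop :=
  ∀ α < γ, Order.IsSuccLimit α →
    (IsClubIn (C α) α ∧ ∀ β < α, IsLimitPt (C α) β → C β = C α ∩ Set.Iio β)

/-- A thread through a coherent sequence. -/
def IsThread (C : Ordinal → Set Ordinal) (γ : Ordinal) (E : Set Ordinal) : Prop :=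
  IsClubIn E γ ∧ ∀ α < γ, IsLimitPt E α → C α = E ∩ Set.Iio α

/-- A potential `□(γ, δ)`-sequence. -/
def IsPotSeq (𝒞 : Ordinal.{0} → Set (Set Ordinal.{0})) (γ : Ordinal.{0}) (δ : Cardinal.{0}) : Prop :=
  ∀ α < γ, Order.IsSuccLimit α →
    ((𝒞 α).Nonempty ∧ Cardinal.mk (𝒞 α) ≤ Cardinal.lift.{1, 0} δ ∧
      (∀ C ∈ 𝒞 α, IsClubIn C α) ∧
      ∀ C ∈ 𝒞 α, ∀ β < α, IsLimitPt C β → C ∩ Set.Iio β ∈ 𝒞 β)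

/-- A thread through a `□(γ, δ)`-style sequence. -/
def IsThreadOf (𝒞 : Ordinal → Set (Set Ordinal)) (γ : Ordinal) (E : Set Ordinal) : Prop :=
  IsClubIn E γ ∧ ∀ α < γ, IsLimitPt E α → E ∩ Set.Iio α ∈ 𝒞 α

/-- Order type of a set of ordinals. -/
noncomputable def otype (C : Set Ordinal) : Ordinal :=
  Ordinal.type ((· < ·) : C → C → Prop)

/-- `f` is an `R`-chain of length `δ`. -/
def RChain {X : Type*} (R : X → X → Prop) (δ : Ordinal) (f : Ordinal → X) : Prop :=
  ∀ a b : Ordinal, a < b → b < δ → R (f a) (f b)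

/-- `R` is `η`-closed: every `R`-chain of length `< η` has an upper bound. -/
def IsEtaClosed {X : Type*} (R : X → X → Prop) (η : Cardinal) : Prop :=
  ∀ δ : Ordinal, δ < η.ord → ∀ f : Ordinal → X, RChain R δ f →
    ∃ r : X, ∀ a < δ, R (f a) r

/-- `DC_κ` for relations on `X`. -/
def DCOn (κ : Cardinal) (X : Type*) : Prop :=
  ∀ η : Cardinal, η ≤ κ → ∀ R : X → X → Prop, IsEtaClosed R η →
    ∃ f : Ordinal → X, RChain R κ.ord f

/-- If `cof γ > ω₁` and a potential `□(γ, ω)`-sequence has a nonempty countable set of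
threads, then some member `C` of some `𝒞 α` is extended by a unique thread. -/
theorem stmt13 (γ : Ordinal) (hγ : Cardinal.aleph 1 < γ.cof)
    (𝒞 : Ordinal → Set (Set Ordinal)) (h𝒞 : IsPotSeq 𝒞 γ Cardinal.aleph0)
    (hcnt : {E : Set Ordinal | IsThreadOf 𝒞 γ E}.Countable)
    (hne : {E : Set Ordinal | IsThreadOf 𝒞 γ E}.Nonempty) :
    ∃ α < γ, Order.IsSuccLimit α ∧ ∃ C ∈ 𝒞 α,
      ∃! E : Set Ordinal, IsThreadOf 𝒞 γ E ∧ E ∩ Set.Iio α = C := by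
  classical
  have haleph0 : Cardinal.aleph0 < γ.cof :=
    lt_trans Cardinal.aleph0_lt_aleph_one hγ
  have hγlim : Order.IsSuccLimit γ := Ordinal.aleph0_le_cof.1 haleph0.le
  obtain ⟨f, hf⟩ := hcnt.exists_eq_range hne
  have hfT : ∀ n, IsThreadOf 𝒞 γ (f n) := by
    intro n
    have : f n ∈ {E : Set Ordinal | IsThreadOf 𝒞 γ E} := by
      rw [hf]; exact Set.mem_range_self n
    exact this
  have hsub : ∀ n, f n ⊆ Set.Iio γ := fun n => (hfT n).1.1
  have hunb : ∀ n, ∀ δ < γ, ∃ β ∈ f n, δ ≤ β := fun n => (hfT n).1.2.1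
  -- witnesses of differences
  have hw : ∀ n m : ℕ, ∃ x : Ordinal, x < γ ∧
      (f n ≠ f m → ¬(x ∈ f n ↔ x ∈ f m)) := by
    intro n m
    by_cases h : f n = f m
    · exact ⟨0, hγlim.pos, fun h' => absurd h h'⟩
    · have : ∃ x, ¬(x ∈ f n ↔ x ∈ f m) := by
        by_contra hc
        push_neg at hc
        exact h (Set.ext hc)
      obtain ⟨x, hx⟩ := this
      have hxγ : x < γ := by
        by_cases hxn : x ∈ f n
        · exact hsub n hxn
        · have hxm : x ∈ f m := by
            by_contra hxm
            exact hx ⟨fun h => absurd h hxn, fun h => absurd h hxm⟩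
          exact hsub m hxm
      exact ⟨x, hxγ, fun _ => hx⟩
  choose w hwγ hwdiff using hw
  -- W : sup of witnesses
  set W : Ordinal := iSup (fun p : ℕ × ℕ => w p.1 p.2) with hW
  have hWγ : W < γ := by
    rw [hW]
    apply Ordinal.iSup_lt_of_lt_cof (f := fun p : ℕ × ℕ => w p.1 p.2) _ (fun p => hwγ p.1 p.2)
    calc (Cardinal.mk (ℕ × ℕ)) ≤ Cardinal.aleph0 := Cardinal.mk_le_aleph0
    _ < γ.cof := haleph0
  have hwW : ∀ n m, w n m ≤ W := fun n m => Ordinal.le_iSup _ (n, m)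
  -- picking elements of threads above a given point
  have hlt1 : ∀ x : Ordinal, x < x + 1 := fun x =>
    (Ordinal.add_one_eq_succ x) ▸ Order.lt_succ x
  have hg : ∀ (n : ℕ) (δ : Ordinal), δ < γ → ∃ β ∈ f n, δ + 1 ≤ β := by
    intro n δ hδ
    exact hunb n (δ + 1) (by rw [Ordinal.add_one_eq_succ]; exact hγlim.succ_lt hδ)
  have key : ∀ δ < γ, ∃ δ' < γ, δ < δ' ∧ ∀ n, ∃ β ∈ f n, δ < β ∧ β ≤ δ' := by
    intro δ hδ
    choose g hg1 hg2 using fun n => hg n δ hδ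
    refine ⟨iSup g, ?_, ?_, ?_⟩
    · apply Ordinal.iSup_lt_of_lt_cof _ (fun n => hsub n (hg1 n))
      calc (Cardinal.mk ℕ) = Cardinal.aleph0 := Cardinal.mk_nat
      _ < γ.cof := haleph0
    · exact lt_of_lt_of_le (lt_of_lt_of_le (hlt1 δ) (hg2 0)) (Ordinal.le_iSup g 0)
    · intro n
      exact ⟨g n, hg1 n, lt_of_lt_of_le (hlt1 δ) (hg2 n), Ordinal.le_iSup g n⟩
  choose! nx hnx1 hnx2 hnx3 using key
  -- the ω-chain
  let d : ℕ → Ordinal := fun n => Nat.rec (W + 1) (fun _ ih => nx ih) n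
  have hd0 : d 0 = W + 1 := rfl
  have hdγ : ∀ n, d n < γ := by
    intro n
    induction n with
    | zero => exact (by rw [hd0, Ordinal.add_one_eq_succ]; exact hγlim.succ_lt hWγ)
    | succ k ih => exact hnx1 (d k) ih
  have hdlt : ∀ n, d n < d (n + 1) := fun n => hnx2 (d n) (hdγ n)
  have hdmono : StrictMono d := strictMono_nat_of_lt_succ hdlt
  set α : Ordinal := iSup d with hα
  have hαγ : α < γ := by
    apply Ordinal.iSup_lt_of_lt_cof _ hdγ
    calc (Cardinal.mk ℕ) = Cardinal.aleph0 := Cardinal.mk_nat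
    _ < γ.cof := haleph0
  have hdα : ∀ n, d n < α := fun n => lt_of_lt_of_le (hdlt n) (Ordinal.le_iSup d (n + 1))
  have hαlim : Order.IsSuccLimit α := by
    rw [Ordinal.isSuccLimit_iff, Order.isSuccPrelimit_iff_succ_lt]
    constructor
    · intro h0
      exact absurd (h0 ▸ hdα 0) (fun h => not_lt_zero h)
    · intro a ha
      rw [hα, Ordinal.lt_iSup_iff] at ha
      obtain ⟨n, hn⟩ := ha
      exact lt_of_le_of_lt (Order.succ_le_of_lt (lt_of_lt_of_le hn ((hdmono.le_iff_le).2 (Nat.le_succ n)))) (hdα (n + 1))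
  -- α is a limit point of every thread
  have hlp : ∀ n, IsLimitPt (f n) α := by
    intro n
    refine ⟨hαlim, ?_⟩
    intro ε hε
    rw [hα, Ordinal.lt_iSup_iff] at hε
    obtain ⟨k, hk⟩ := hε
    obtain ⟨β, hβf, hβ1, hβ2⟩ := hnx3 (d k) (hdγ k) n
    exact ⟨β, hβf, le_of_lt (lt_of_lt_of_le hk hβ1.le), lt_of_le_of_lt hβ2 (hdα (k + 1))⟩
  -- the thread restrictions agree iff threads equal
  have hWα : W < α := by
    have h1 : W < d 0 := by rw [hd0]; exact hlt1 W
    exact lt_of_lt_of_le h1 (Ordinal.le_iSup d 0)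
  have hrestr : ∀ n m, f n ∩ Set.Iio α = f m ∩ Set.Iio α → f n = f m := by
    intro n m h
    by_contra hne'
    have hx := hwdiff n m hne'
    have hxα : w n m < α := lt_of_le_of_lt (hwW n m) hWα
    apply hx
    constructor
    · intro hmem
      have : w n m ∈ f n ∩ Set.Iio α := ⟨hmem, hxα⟩
      rw [h] at this
      exact this.1
    · intro hmem
      have : w n m ∈ f m ∩ Set.Iio α := ⟨hmem, hxα⟩
      rw [← h] at this
      exact this.1
  -- conclude
  refine ⟨α, hαγ, hαlim, f 0 ∩ Set.Iio α, (hfT 0).2 α hαγ (hlp 0), f 0, ⟨hfT 0, rfl⟩, ?_⟩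
  rintro E ⟨hE, hEα⟩
  have : E ∈ {E : Set Ordinal | IsThreadOf 𝒞 γ E} := hE
  rw [hf] at this
  obtain ⟨m, hm⟩ := this
  subst hm
  exact hrestr m 0 hEα
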